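/- arXiv:2601.21475 — 2 statements merged into one kernel-verified Lean document; each statement's English description precedes it below -/
import Mathlib

section
/- Suppose (V_t) is a nonnegative, almost surely nonincreasing integrable process such that for every ε > 0 there exists η(ε) > 0 with E[V_t - V_{t+1} | 𝓕_t] ≥ η(ε) on the event {V_t > ε}, for all t. Then V_t → 0 almost surely. -/
open MeasureTheory Filter

/-- A nonnegative, a.s. nonincreasing, integrable adapted process with a
positive drift away from zero (for every `ε > 0` there is `η(ε) > 0` with
`E[V t − V (t+1) | 𝓕 t] ≥ η ε` on the event `{V t > ε}`) converges to `0`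
almost surely. -/
theorem abom_drift_to_zero
    {Ω : Type*} {m : MeasurableSpace Ω} (μ : Measure Ω) [IsProbabilityMeasure μ]
    (ℱ : Filtration ℕ m) (V : ℕ → Ω → ℝ)
    (hadapted : Adapted ℱ V)
    (hint : ∀ t, Integrable (V t) μ)
    (hnonneg : ∀ t, ∀ᵐ ω ∂μ, 0 ≤ V t ω)
    (hmono : ∀ t, ∀ᵐ ω ∂μ, V (t + 1) ω ≤ V t ω)
    (hdrift : ∀ ε : ℝ, 0 < ε → ∃ η : ℝ, 0 < η ∧ ∀ t, ∀ᵐ ω ∂μ,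
      ε < V t ω → η ≤ (μ[fun ω' => V t ω' - V (t + 1) ω' | ℱ t]) ω) :
    ∀ᵐ ω ∂μ, Tendsto (fun t => V t ω) atTop (nhds 0) := by
  have main : ∀ ε : ℝ, 0 < ε → ∀ᵐ ω ∂μ, ∀ᶠ t in atTop, V t ω ≤ ε := by
    intro ε hε
    obtain ⟨η, hη, hd⟩ := hdrift ε hε
    set A : ℕ → Set Ω := fun t => {ω | ε < V t ω} with hA
    have hAmeas : ∀ t, MeasurableSet (A t) := fun t =>
      measurableSet_lt measurable_const ((hadapted t).mono (ℱ.le t) le_rfl)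
    have key : ∀ t, η * (μ (A t)).toReal ≤ ∫ ω, V t ω ∂μ - ∫ ω, V (t + 1) ω ∂μ := by
      intro t
      set g := μ[fun ω' => V t ω' - V (t + 1) ω' | ℱ t] with hg
      have hgint : Integrable g μ := integrable_condExp
      have hgnn : 0 ≤ᵐ[μ] g :=
        condExp_nonneg ((hmono t).mono fun ω h => sub_nonneg.2 h)
      have h1 : ∫ ω, (A t).indicator (fun _ => η) ω ∂μ ≤ ∫ ω, g ω ∂μ := by
        refine integral_mono_ae
          ((integrable_const η).indicator (hAmeas t)) hgint ?_
        filter_upwards [hd t, hgnn] with ω h1 h2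
        by_cases hω : ω ∈ A t
        · simpa [Set.indicator_of_mem hω] using h1 hω
        · simpa [Set.indicator_of_notMem hω] using h2
      rw [integral_indicator_const _ (hAmeas t), smul_eq_mul] at h1
      have h2 : ∫ ω, g ω ∂μ = ∫ ω, (V t ω - V (t + 1) ω) ∂μ :=
        integral_condExp (ℱ.le t)
      rw [h2, integral_sub (hint t) (hint (t + 1))] at h1
      rw [measureReal_def] at h1
      linarith [h1]
    have hsum : ∀ T, ∑ t ∈ Finset.range T, (μ (A t)).toReal ≤ (∫ ω, V 0 ω ∂μ) / η := by
      intro T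
      rw [le_div_iff₀ hη]
      have h1 : ∑ t ∈ Finset.range T, η * (μ (A t)).toReal ≤
          ∑ t ∈ Finset.range T, ((∫ ω, V t ω ∂μ) - ∫ ω, V (t + 1) ω ∂μ) :=
        Finset.sum_le_sum fun t _ => key t
      rw [Finset.sum_range_sub' (fun t => ∫ ω, V t ω ∂μ)] at h1
      have h2 : 0 ≤ ∫ ω, V T ω ∂μ := integral_nonneg_of_ae (hnonneg T)
      have h3 : (∑ t ∈ Finset.range T, (μ (A t)).toReal) * η =
          ∑ t ∈ Finset.range T, η * (μ (A t)).toReal := by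
        rw [Finset.sum_mul]; exact Finset.sum_congr rfl fun t _ => mul_comm _ _
      linarith
    have htsum : (∑' t, μ (A t)) ≠ ⊤ := by
      refine ne_top_of_le_ne_top (b := ENNReal.ofReal ((∫ ω, V 0 ω ∂μ) / η))
        ENNReal.ofReal_ne_top ?_
      refine Summable.tsum_le_of_sum_range_le ENNReal.summable ?_
      intro T
      have h1 : ∑ t ∈ Finset.range T, μ (A t) =
          ENNReal.ofReal (∑ t ∈ Finset.range T, (μ (A t)).toReal) := by
        rw [ENNReal.ofReal_sum_of_nonneg fun t _ => ENNReal.toReal_nonneg]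
        exact Finset.sum_congr rfl fun t _ =>
          (ENNReal.ofReal_toReal (measure_ne_top μ _)).symm
      rw [h1]
      exact ENNReal.ofReal_le_ofReal (hsum T)
    filter_upwards [ae_eventually_notMem htsum] with ω hω
    filter_upwards [hω] with t ht
    exact le_of_not_gt ht
  have h1 : ∀ᵐ ω ∂μ, ∀ n : ℕ, ∀ᶠ t in atTop, V t ω ≤ 1 / (n + 1) := by
    rw [ae_all_iff]
    intro n
    exact main _ (by positivity)
  have h2 : ∀ᵐ ω ∂μ, ∀ t, 0 ≤ V t ω := ae_all_iff.2 hnonneg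
  filter_upwards [h1, h2] with ω hω hnn
  rw [Metric.tendsto_atTop]
  intro ε hε
  obtain ⟨n, hn⟩ := exists_nat_one_div_lt hε
  obtain ⟨N, hN⟩ := eventually_atTop.mp (hω n)
  refine ⟨N, fun t ht => ?_⟩
  rw [Real.dist_eq, sub_zero, abs_of_nonneg (hnn t)]
  exact lt_of_le_of_lt (hN t ht) hn
end

section
/- Let (f_t*) be a nonincreasing sequence bounded below by f*, adapted to a filtration, and suppose that for every ε > 0 there is a constant q(ε) > 0 such that, whenever f_t* > f* + ε, the conditional probability (given 𝓕_t) that f_{t+1}* < f* + ε/2 is at least q(ε). Then f_t* → f* almost surely. -/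
open MeasureTheory Filter

/-- Let `(f t)` be a nonincreasing adapted sequence bounded below by `fstar`.
If for every `ε > 0` there is `q ε > 0` such that, whenever `f t > fstar + ε`,
the conditional probability given `𝓕 t` that `f (t+1) < fstar + ε/2` is at
least `q ε`, then `f t → fstar` almost surely. -/
theorem abom_conditional_improvement_convergence
    {Ω : Type*} {m : MeasurableSpace Ω} (μ : Measure Ω) [IsProbabilityMeasure μ]
    (ℱ : Filtration ℕ m) (f : ℕ → Ω → ℝ) (fstar : ℝ)
    (hadapted : Adapted ℱ f)
    (hmono : ∀ t, ∀ᵐ ω ∂μ, f (t + 1) ω ≤ f t ω)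
    (hbdd : ∀ t, ∀ᵐ ω ∂μ, fstar ≤ f t ω)
    (himp : ∀ ε : ℝ, 0 < ε → ∃ q : ℝ, 0 < q ∧ ∀ t, ∀ᵐ ω ∂μ,
      fstar + ε < f t ω →
        q ≤ (μ[Set.indicator {ω' | f (t + 1) ω' < fstar + ε / 2}
              (fun _ => (1 : ℝ)) | ℱ t]) ω) :
    ∀ᵐ ω ∂μ, Tendsto (fun t => f t ω) atTop (nhds fstar) := by
  classical
  have hfmeas : ∀ t, Measurable (f t) := fun t => Measurable.le (ℱ.le t) (hadapted t)
  have key : ∀ ε : ℝ, 0 < ε → ∀ᵐ ω ∂μ, ∃ t, f t ω ≤ fstar + ε := by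
    intro ε hε
    obtain ⟨q, hqpos, hq'⟩ := himp ε hε
    set q' : ℝ := min q 1 with hq'def
    have hq'pos : (0:ℝ) < q' := lt_min hqpos one_pos
    have hq'le : q' ≤ 1 := min_le_right _ _
    set A : ℕ → Set Ω := fun t => {ω | fstar + ε < f t ω} with hA
    set B : ℕ → Set Ω := fun t => {ω' | f (t + 1) ω' < fstar + ε / 2} with hB
    have hAmeasF : ∀ t, MeasurableSet[ℱ t] (A t) := fun t =>
      measurableSet_lt measurable_const (hadapted t)
    have hAmeas : ∀ t, MeasurableSet (A t) := fun t => ℱ.le t _ (hAmeasF t)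
    have hBmeas : ∀ t, MeasurableSet (B t) := fun t =>
      measurableSet_lt (hfmeas (t+1)) measurable_const
    have step : ∀ t, (μ (A (t+1))).toReal ≤ (1 - q') * (μ (A t)).toReal := by
      intro t
      have hint : Integrable (Set.indicator (B t) (fun _ => (1:ℝ))) μ :=
        (integrable_const 1).indicator (hBmeas t)
      have h1 : q' * (μ (A t)).toReal ≤ (μ (A t ∩ B t)).toReal := by
        have hce : ∫ ω in A t, (μ[Set.indicator (B t) (fun _ => (1:ℝ)) | ℱ t]) ω ∂μ
            = ∫ ω in A t, Set.indicator (B t) (fun _ => (1:ℝ)) ω ∂μ :=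
          setIntegral_condExp (ℱ.le t) hint (hAmeasF t)
        have hrhs : ∫ ω in A t, Set.indicator (B t) (fun _ => (1:ℝ)) ω ∂μ
            = (μ (A t ∩ B t)).toReal := by
          rw [setIntegral_indicator (hBmeas t), setIntegral_const, smul_eq_mul, mul_one]; rfl
        have hlb : q' * (μ (A t)).toReal
            ≤ ∫ ω in A t, (μ[Set.indicator (B t) (fun _ => (1:ℝ)) | ℱ t]) ω ∂μ := by
          have hmem : ∀ᵐ ω ∂μ.restrict (A t), ω ∈ A t := ae_restrict_mem (hAmeas t)
          have hb : ∀ᵐ ω ∂μ.restrict (A t),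
              q' ≤ (μ[Set.indicator (B t) (fun _ => (1:ℝ)) | ℱ t]) ω := by
            filter_upwards [hmem, ae_restrict_of_ae (hq' t)] with ω h h'
            exact le_trans (min_le_left _ _) (h' h)
          calc q' * (μ (A t)).toReal = ∫ _ω in A t, q' ∂μ := by
                rw [setIntegral_const, smul_eq_mul, mul_comm]; rfl
            _ ≤ _ := setIntegral_mono_ae_restrict
                (integrableOn_const (measure_ne_top μ _))
                integrable_condExp.integrableOn hb
        calc q' * (μ (A t)).toReal ≤ _ := hlb
          _ = (μ (A t ∩ B t)).toReal := hce.trans hrhs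
      have hsub : μ (A (t+1)) ≤ μ (A t \ B t) := by
        apply measure_mono_ae
        filter_upwards [hmono (t+1), hmono t] with ω _ hm hmem
        have h2 : fstar + ε < f (t+1) ω := hmem
        refine ⟨lt_of_lt_of_le h2 hm, fun hB' => ?_⟩
        have h3 : f (t+1) ω < fstar + ε / 2 := hB'
        linarith
      have hsplit := measure_inter_add_diff (μ := μ) (A t) (hBmeas t)
      have hfin1 : μ (A t ∩ B t) ≠ ⊤ := measure_ne_top μ _
      have hfin2 : μ (A t \ B t) ≠ ⊤ := measure_ne_top μ _
      have hadd := congrArg ENNReal.toReal hsplit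
      rw [ENNReal.toReal_add hfin1 hfin2] at hadd
      have hmono'' : (μ (A (t+1))).toReal ≤ (μ (A t \ B t)).toReal :=
        ENNReal.toReal_mono hfin2 hsub
      linarith
    have hbound : ∀ t, (μ (A t)).toReal ≤ (1 - q') ^ t := by
      intro t
      induction t with
      | zero =>
        simp only [pow_zero]
        have h1 : μ (A 0) ≤ 1 := prob_le_one
        have := ENNReal.toReal_mono ENNReal.one_ne_top h1
        simpa using this
      | succ n ih =>
        calc (μ (A (n+1))).toReal ≤ (1 - q') * (μ (A n)).toReal := step n
          _ ≤ (1 - q') * (1 - q') ^ n :=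
              mul_le_mul_of_nonneg_left ih (by linarith)
          _ = (1 - q') ^ (n + 1) := by ring
    have hinter : μ (⋂ t, A t) = 0 := by
      have hle : ∀ t, (μ (⋂ t, A t)).toReal ≤ (1 - q') ^ t := fun t =>
        le_trans (ENNReal.toReal_mono (measure_ne_top μ _)
          (measure_mono (Set.iInter_subset _ t))) (hbound t)
      have hlim : Tendsto (fun t : ℕ => (1 - q') ^ t) atTop (nhds 0) :=
        tendsto_pow_atTop_nhds_zero_of_lt_one (by linarith) (by linarith)
      have h0 : (μ (⋂ t, A t)).toReal ≤ 0 :=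
        ge_of_tendsto' hlim hle
      have h0' : (μ (⋂ t, A t)).toReal = 0 := le_antisymm h0 ENNReal.toReal_nonneg
      exact (ENNReal.toReal_eq_zero_iff _).1 h0' |>.resolve_right (measure_ne_top μ _)
    have hset : {ω | ¬ ∃ t, f t ω ≤ fstar + ε} = ⋂ t, A t := by
      ext ω
      simp only [hA, Set.mem_iInter, Set.mem_setOf_eq, not_exists, not_le]
    rw [ae_iff, hset]
    exact hinter
  have hmono' : ∀ᵐ ω ∂μ, ∀ t, f (t+1) ω ≤ f t ω := ae_all_iff.2 hmono
  have hbdd' : ∀ᵐ ω ∂μ, ∀ t, fstar ≤ f t ω := ae_all_iff.2 hbdd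
  have hkey : ∀ᵐ ω ∂μ, ∀ n : ℕ, ∃ t, f t ω ≤ fstar + 1/(n+1) :=
    ae_all_iff.2 (fun n => key (1/(n+1)) (by positivity))
  filter_upwards [hmono', hbdd', hkey] with ω h1 h2 h3
  have hanti : Antitone fun t => f t ω := antitone_nat_of_succ_le h1
  rw [Metric.tendsto_atTop]
  intro ε hε
  obtain ⟨n, hn⟩ := exists_nat_one_div_lt hε
  obtain ⟨t0, ht0⟩ := h3 n
  refine ⟨t0, fun t ht => ?_⟩
  have hft : f t ω ≤ f t0 ω := hanti ht
  rw [Real.dist_eq, abs_of_nonneg (by linarith [h2 t])]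
  have : (1:ℝ)/(n+1) < ε := by exact_mod_cast hn
  linarith
end
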